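/- Let G = ⟨x, y | x^p = y^m = 1, x^{-1} y x = y^r⟩ with p the smallest prime divisor of |G| and gcd(p(r-1), m) = 1, and let N = ⟨y⟩ with canonical projection φ : G → G/N ≅ C_p. Let T = g_1·…·g_t be a sequence over G such that φ(T) is a minimal product-one sequence over G/N, and let u ∈ π(T). Then there exist pairwise distinct s_1, …, s_t ∈ [0, p-1] such that {u^(r^{s_1}), …, u^(r^{s_t})} ⊆ π(T); moreover if u ≠ 1 then the elements u^(r^{s_1}), …, u^(r^{s_t}) are pairwise distinct. -/

import Mathlib

section Aux
variable {G : Type*} [Group G]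

lemma aux_conj {x y : G} {r : ℕ} (hrel : x⁻¹ * y * x = y ^ r)
    {v : G} (hv : v ∈ Subgroup.zpowers y) : x⁻¹ * v * x = v ^ r := by
  obtain ⟨k, rfl⟩ := hv
  have h1 : x⁻¹ * y ^ k * x = (x⁻¹ * y * x) ^ k := by
    rw [show (x⁻¹ * y * x) = x⁻¹ * y * x⁻¹⁻¹ by rw [inv_inv],
      show x⁻¹ * y ^ k * x = x⁻¹ * y ^ k * x⁻¹⁻¹ by rw [inv_inv], conj_zpow]
  rw [h1, hrel]
  rw [← zpow_natCast (y ^ k) r, ← zpow_mul, ← zpow_natCast y r, ← zpow_mul, mul_comm]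

lemma aux_conj_pow {x y : G} {r : ℕ} (hrel : x⁻¹ * y * x = y ^ r)
    {v : G} (hv : v ∈ Subgroup.zpowers y) (a : ℕ) :
    (x ^ a)⁻¹ * v * x ^ a = v ^ (r ^ a) := by
  induction a with
  | zero => simp
  | succ n ih =>
    have h2 : v ^ r ^ n ∈ Subgroup.zpowers y := Subgroup.pow_mem _ hv _
    rw [pow_succ, mul_inv_rev, show x⁻¹ * (x ^ n)⁻¹ * v * (x ^ n * x)
        = x⁻¹ * ((x ^ n)⁻¹ * v * x ^ n) * x by group, ih,
      aux_conj hrel h2, ← pow_mul, pow_succ]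

end Aux

/-- The set of products of a sequence (multiset) `S` over all orderings. -/
def piSet {G : Type*} [Group G] (S : Multiset G) : Set G :=
  {g | ∃ l : List G, (l : Multiset G) = S ∧ l.prod = g}

theorem stmt_13 (p m r : ℕ) (G : Type*) [Group G] [Fintype G] (x y : G)
    (hp : p.Prime) (hm : 0 < m) (hr : 0 < r)
    (hcard : Fintype.card G = p * m)
    (hox : orderOf x = p) (hoy : orderOf y = m)
    (hrel : x⁻¹ * y * x = y ^ r)
    (hgen : Subgroup.closure ({x, y} : Set G) = ⊤)
    (hpmin : ∀ q : ℕ, q.Prime → q ∣ p * m → p ≤ q)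
    (hgcd : Nat.gcd (p * (r - 1)) m = 1)
    (N : Subgroup G) [N.Normal] (hNy : N = Subgroup.zpowers y)
    (T : Multiset G)
    (hone : (1 : G ⧸ N) ∈ piSet (T.map (QuotientGroup.mk' N)))
    (hminimal : ∀ T' : Multiset (G ⧸ N), T' < T.map (QuotientGroup.mk' N) → T' ≠ 0 →
      (1 : G ⧸ N) ∉ piSet T')
    (u : G) (hu : u ∈ piSet T) :
    ∃ s : Fin (Multiset.card T) → ℕ, Function.Injective s ∧ (∀ i, s i ≤ p - 1) ∧
      (∀ i, u ^ (r ^ (s i)) ∈ piSet T) ∧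
      (u ≠ 1 → Function.Injective fun i => u ^ (r ^ (s i))) := by
  classical
  obtain ⟨l, hlT, hlu⟩ := hu
  set φ : G →* G ⧸ N := QuotientGroup.mk' N with hφ
  have hyN : y ∈ N := hNy ▸ Subgroup.mem_zpowers y
  -- cardinalities
  have hNcard : Nat.card N = m := by rw [hNy, Nat.card_zpowers, hoy]
  have hGcard : Nat.card G = p * m := by rw [Nat.card_eq_fintype_card, hcard]
  have hQcard : Nat.card (G ⧸ N) = p := by
    have h := Subgroup.card_eq_card_quotient_mul_card_subgroup N
    rw [hNcard, hGcard] at h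
    exact (Nat.eq_of_mul_eq_mul_right hm h.symm)
  -- x is not in N
  have hxN : x ∉ N := by
    intro hx
    have hsub : ({x, y} : Set G) ⊆ N := by
      intro g hg; rcases hg with rfl | rfl
      · exact hx
      · exact hyN
    have : N = ⊤ := top_le_iff.mp (hgen ▸ (Subgroup.closure_le N).mpr hsub)
    rw [this] at hNcard
    rw [Subgroup.card_top, hGcard] at hNcard
    nlinarith [hp.two_le, hm]
  -- image of x generates the quotient
  have hxb1 : φ x ≠ 1 := by
    simpa [hφ, QuotientGroup.eq_one_iff] using hxN
  have hordxb : orderOf (φ x) = p := by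
    have hdvd : orderOf (φ x) ∣ p := hox ▸ orderOf_map_dvd φ x
    rcases (Nat.Prime.eq_one_or_self_of_dvd hp _ hdvd) with h | h
    · exact absurd (orderOf_eq_one_iff.mp h) hxb1
    · exact h
  have htop : Subgroup.zpowers (φ x) = ⊤ := by
    apply Subgroup.eq_top_of_card_eq
    rw [Nat.card_zpowers, hordxb, hQcard]
  have hsurj : ∀ g : G ⧸ N, ∃ a : ℕ, a < p ∧ (φ x) ^ a = g := by
    intro g
    have : g ∈ Subgroup.zpowers (φ x) := htop ▸ Subgroup.mem_top g
    obtain ⟨k, rfl⟩ := this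
    refine ⟨(k % (p : ℤ)).toNat, ?_, ?_⟩
    · have h1 : (0:ℤ) < p := by exact_mod_cast hp.pos
      have := Int.emod_lt_of_pos k h1
      omega
    · have h1 : (0:ℤ) < p := by exact_mod_cast hp.pos
      have h0 : (0:ℤ) ≤ k % p := Int.emod_nonneg k (by positivity)
      rw [← zpow_natCast, Int.toNat_of_nonneg h0, ← hordxb, zpow_mod_orderOf]
  -- u lies in N
  have huN : u ∈ N := by
    obtain ⟨l₀, hl₀, hl₀p⟩ := hone
    have hperm : List.Perm (l.map φ) l₀ := by
      rw [← Multiset.coe_eq_coe, hl₀, ← hlT, Multiset.map_coe]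
    have hcomm : (l.map φ).Pairwise Commute := by
      apply List.pairwise_of_forall_mem_list
      intro a _ b _
      obtain ⟨ka, rfl⟩ := htop ▸ Subgroup.mem_top a
      obtain ⟨kb, rfl⟩ := htop ▸ Subgroup.mem_top b
      exact (Commute.refl (φ x)).zpow_zpow ka kb
    have : φ u = 1 := by
      rw [← hlu, map_list_prod, hperm.prod_eq' hcomm, hl₀p]
    simpa [hφ, QuotientGroup.eq_one_iff] using this
  have hlen : l.length = Multiset.card T := by rw [← hlT]; simp
  -- the partial products and their images
  set Q : Fin (Multiset.card T) → G ⧸ N := fun i => φ ((l.take i).prod) with hQ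
  have hQinj : Function.Injective Q := by
    have key : ∀ i j : Fin (Multiset.card T), i < j → Q i ≠ Q j := by
      intro i j hij heq
      set seg : List G := (l.drop i).take (j - i) with hseg
      have htake : l.take j = l.take i ++ seg := by
        rw [show (j : ℕ) = i + (j - i) by omega, List.take_add]
      have hseglen : seg.length = (j : ℕ) - i := by
        simp only [hseg, List.length_take, List.length_drop, hlen]
        omega
      have hprodseg : ((seg.map φ).prod : G ⧸ N) = 1 := by
        have hstep : φ ((l.take i).prod) * (seg.map φ).prod = φ ((l.take i).prod) := by
          rw [← map_list_prod, ← map_mul, ← List.prod_append, ← htake]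
          exact heq.symm
        exact mul_eq_left.mp hstep
      refine hminimal ((seg.map φ : List (G ⧸ N)) : Multiset (G ⧸ N)) ?_ ?_ ⟨seg.map φ, rfl, hprodseg⟩
      · have hsub : List.Sublist seg l := ((List.take_sublist _ _).trans (List.drop_sublist _ _))
        have hle : ((seg.map φ : List (G ⧸ N)) : Multiset (G ⧸ N)) ≤ T.map φ := by
          rw [← hlT, Multiset.map_coe, Multiset.coe_le]
          exact (hsub.map φ).subperm
        refine lt_of_le_of_ne hle ?_
        intro hcontra
        have := congrArg Multiset.card hcontra
        simp only [Multiset.coe_card, List.length_map, Multiset.card_map, hseglen] at this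
        have hj := j.isLt
        omega
      · simp only [ne_eq, Multiset.coe_eq_zero, List.map_eq_nil_iff]
        intro hnil
        have := congrArg List.length hnil
        rw [hseglen] at this
        simp at this
        omega
    intro i j h
    rcases lt_trichotomy i j with hij | hij | hij
    · exact absurd h (key i j hij)
    · exact hij
    · exact absurd h.symm (key j i hij)
  -- choose exponents
  choose a ha_lt ha_eq using fun i => hsurj (Q i)
  have haInj : Function.Injective a := by
    intro i j h
    apply hQinj
    rw [← ha_eq i, ← ha_eq j, h]
  -- conjugation identity
  have hconj : ∀ i : Fin (Multiset.card T), ((l.take (i : ℕ)).prod)⁻¹ * u * (l.take (i : ℕ)).prod = u ^ (r ^ (a i)) := by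
    intro i
    set P := (l.take i).prod with hP
    have hn : (x ^ (a i))⁻¹ * P ∈ N := by
      have : φ ((x ^ (a i))⁻¹ * P) = 1 := by
        rw [map_mul, map_inv, map_pow, ha_eq i, hQ]
        simp [hP]
      exact (QuotientGroup.eq_one_iff _).mp this
    set n : G := (x ^ (a i))⁻¹ * P with hn_def
    have hPn : P = x ^ (a i) * n := by rw [hn_def]; group
    have hcore : (x ^ (a i))⁻¹ * u * x ^ (a i) = u ^ (r ^ (a i)) :=
      aux_conj_pow hrel (hNy ▸ huN) (a i)
    have hu_pow : u ^ (r ^ (a i)) ∈ Subgroup.zpowers y :=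
      Subgroup.pow_mem _ (hNy ▸ huN) _
    have hcomm : Commute (u ^ (r ^ (a i))) n := by
      obtain ⟨k1, hk1⟩ := hu_pow
      obtain ⟨k2, hk2⟩ := (hNy ▸ hn : n ∈ Subgroup.zpowers y)
      rw [← hk1, ← hk2]
      exact (Commute.refl y).zpow_zpow k1 k2
    calc P⁻¹ * u * P = n⁻¹ * ((x ^ (a i))⁻¹ * u * x ^ (a i)) * n := by rw [hPn]; group
    _ = n⁻¹ * u ^ (r ^ (a i)) * n := by rw [hcore]
    _ = u ^ (r ^ (a i)) := by rw [mul_assoc, hcomm.eq]; group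
  -- membership of the conjugates
  have hmem : ∀ i, u ^ (r ^ (a i)) ∈ piSet T := by
    intro i
    refine ⟨l.drop i ++ l.take i, ?_, ?_⟩
    · exact (Multiset.coe_eq_coe.mpr
        (List.perm_append_comm.trans (by rw [List.take_append_drop]))).trans hlT
    · have : (l.drop i).prod = ((l.take i).prod)⁻¹ * u := by
        rw [← hlu]
        rw [show l.prod = (l.take i ++ l.drop i).prod by rw [List.take_append_drop]]
        rw [List.prod_append]; group
      rw [List.prod_append, this, ← hconj i]
  -- distinctness of the conjugates when u ≠ 1
  have contra : ∀ b c : ℕ, b < c → c < p → u ≠ 1 → u ^ r ^ c = u ^ r ^ b → False := by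
    intro b c hbc hcp hu1 heq
    set d := c - b with hd
    have hdpos : 0 < d := by omega
    have hdp : d < p := by omega
    set w : G := u ^ r ^ b with hw_def
    have hwzp : w ∈ Subgroup.zpowers y := Subgroup.pow_mem _ (hNy ▸ huN) _
    have hb : (x ^ b)⁻¹ * u * x ^ b = w := aux_conj_pow hrel (hNy ▸ huN) b
    have hc : (x ^ c)⁻¹ * u * x ^ c = u ^ r ^ c := aux_conj_pow hrel (hNy ▸ huN) c
    have hsplit : x ^ c = x ^ b * x ^ d := by rw [← pow_add]; congr 1; omega
    have hkey : (x ^ d)⁻¹ * w * x ^ d = w := by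
      rw [← hb]
      have : (x ^ d)⁻¹ * ((x ^ b)⁻¹ * u * x ^ b) * x ^ d = (x ^ c)⁻¹ * u * x ^ c := by
        rw [hsplit]; group
      rw [this, hc, heq, hb]
    have hcom : Commute (x ^ d) w := by
      have := hkey
      rw [Commute, SemiconjBy]
      calc x ^ d * w = x ^ d * ((x ^ d)⁻¹ * w * x ^ d) := by rw [hkey]
      _ = w * x ^ d := by group
    have hcop : Nat.Coprime d p := (Nat.coprime_of_lt_prime hdpos.ne' hdp hp).symm
    obtain ⟨e, -, he⟩ := Nat.exists_mul_mod_eq_one_of_coprime hcop hp.one_lt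
    have hxe : (x ^ d) ^ e = x := by
      rw [← pow_mul, ← pow_mod_orderOf, hox, he, pow_one]
    have hcomx : Commute x w := hxe ▸ hcom.pow_left e
    have hwr : w ^ r = w := by
      rw [← aux_conj hrel hwzp, (hcomx.inv_left).eq]; group
    have hw1 : w ^ (r - 1) = 1 := by
      have h1 : w ^ (r - 1) * w = w ^ r := by
        rw [← pow_succ]; congr 1; omega
      have h2 : w ^ (r - 1) * w = 1 * w := by rw [h1, hwr, one_mul]
      exact mul_right_cancel h2
    have hdvd1 : orderOf w ∣ r - 1 := orderOf_dvd_of_pow_eq_one hw1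
    have hwm : w ^ m = 1 := by
      obtain ⟨k, hk⟩ := hwzp
      rw [← hk, ← zpow_natCast, ← zpow_mul, mul_comm, zpow_mul, zpow_natCast,
        show y ^ m = 1 from hoy ▸ pow_orderOf_eq_one y, one_zpow]
    have hdvd2 : orderOf w ∣ m := orderOf_dvd_of_pow_eq_one hwm
    have : orderOf w ∣ 1 := by
      rw [← hgcd]
      exact Nat.dvd_gcd (hdvd1.trans (Dvd.intro_left p rfl)) hdvd2
    have hw_one : w = 1 := orderOf_eq_one_iff.mp (Nat.eq_one_of_dvd_one this ▸ rfl)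
    have : u = 1 := by
      have := hb
      rw [hw_one] at this
      have : u = x ^ b * 1 * (x ^ b)⁻¹ := by rw [← this]; group
      simpa using this
    exact hu1 this
  have hdist : u ≠ 1 → Function.Injective fun i => u ^ (r ^ (a i)) := by
    intro hu1 i j hij
    have hij' : u ^ r ^ a i = u ^ r ^ a j := hij
    rcases lt_trichotomy (a i) (a j) with h | h | h
    · exact (contra _ _ h (ha_lt j) hu1 hij'.symm).elim
    · exact haInj h
    · exact (contra _ _ h (ha_lt i) hu1 hij').elim
  exact ⟨a, haInj, fun i => Nat.le_sub_one_of_lt (ha_lt i), hmem, hdist⟩
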